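/- Let μ : ℤ → {0,1} be a two-sided 0-1 word. Then the graph G_μ with vertex set ℤ is prime. -/

import Mathlib

/-- Adjacency rule of the graph associated with a two-sided 0-1 word `μ : ℤ → {0,1}`:
for `i < j`, `{i,j}` is an edge iff (`μ j = 1` and `j = i+1`) or (`μ j = 0` and `j ≠ i+1`). -/
def GmuZAdj (μ : ℤ → Bool) (i j : ℤ) : Prop :=
  (i < j ∧ ((μ j = true ∧ j = i + 1) ∨ (μ j = false ∧ j ≠ i + 1))) ∨
  (j < i ∧ ((μ i = true ∧ i = j + 1) ∨ (μ i = false ∧ i ≠ j + 1)))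

/-- The graph `G_μ` on `ℤ` associated with a two-sided 0-1 word. -/
def GmuZ (μ : ℤ → Bool) : SimpleGraph ℤ where
  Adj i j := GmuZAdj μ i j
  symm := ⟨fun i j h => Or.symm h⟩
  loopless := ⟨fun i h => by
    rcases h with ⟨h1, _⟩ | ⟨h1, _⟩ <;> exact lt_irrefl i h1⟩

/-- `M` is a module of the graph `G`. -/
def IsModule {V : Type*} (G : SimpleGraph V) (M : Set V) : Prop :=
  ∀ x ∉ M, (∀ a ∈ M, G.Adj x a) ∨ (∀ a ∈ M, ¬ G.Adj x a)

/-- A graph is prime if its only modules are the empty set, singletons and the whole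
vertex set. -/
def GraphPrime {V : Type*} (G : SimpleGraph V) : Prop :=
  ∀ M : Set V, IsModule G M → M = ∅ ∨ (∃ a, M = {a}) ∨ M = Set.univ

namespace Stmt9Aux

variable {μ : ℤ → Bool}

lemma adj_iff {x y : ℤ} (h : x < y) :
    (GmuZ μ).Adj x y ↔ ((μ y = true ∧ y = x + 1) ∨ (μ y = false ∧ y ≠ x + 1)) := by
  constructor
  · rintro (⟨_, h2⟩ | ⟨h1, _⟩)
    · exact h2
    · omega
  · intro h2
    exact Or.inl ⟨h, h2⟩

lemma adj_consec {x y : ℤ} (h : y = x + 1) :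
    (GmuZ μ).Adj x y ↔ μ y = true := by
  rw [adj_iff (by omega)]
  cases hy : μ y <;> simp [h, hy]

lemma adj_far {x y : ℤ} (h : x + 1 < y) :
    (GmuZ μ).Adj x y ↔ μ y = false := by
  rw [adj_iff (by omega)]
  cases hy : μ y <;> simp [hy] <;> omega

lemma mem_of_split {M : Set ℤ} (hM : IsModule (GmuZ μ) M) {a b z : ℤ}
    (ha : a ∈ M) (hb : b ∈ M) (h1 : (GmuZ μ).Adj z a) (h2 : ¬ (GmuZ μ).Adj z b) :
    z ∈ M := by
  by_contra hz
  rcases hM z hz with h | h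
  · exact h2 (h b hb)
  · exact h a ha h1

lemma step_up {M : Set ℤ} (hM : IsModule (GmuZ μ) M) {a b : ℤ}
    (ha : a ∈ M) (hb : b ∈ M) (hab : a < b) : b + 1 ∈ M := by
  have hc : (GmuZ μ).Adj b (b + 1) ↔ μ (b + 1) = true := adj_consec rfl
  have hf : (GmuZ μ).Adj a (b + 1) ↔ μ (b + 1) = false := adj_far (by omega)
  cases h : μ (b + 1) with
  | true =>
    exact mem_of_split hM hb ha ((hc.mpr h).symm)
      (fun hadj => by simp [h] at hf; exact hf hadj.symm)
  | false =>
    exact mem_of_split hM ha hb ((hf.mpr h).symm)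
      (fun hadj => by simp [h] at hc; exact hc hadj.symm)

lemma step_down {M : Set ℤ} (hM : IsModule (GmuZ μ) M) {a b : ℤ}
    (ha : a ∈ M) (hb : b ∈ M) (hab : a < b) : ∃ e ∈ M, e < a := by
  by_cases h : μ a = μ b
  · -- use a - 1
    have hc : (GmuZ μ).Adj (a - 1) a ↔ μ a = true := adj_consec (by omega)
    have hf : (GmuZ μ).Adj (a - 1) b ↔ μ b = false := adj_far (by omega)
    refine ⟨a - 1, ?_, by omega⟩
    cases hb' : μ b with
    | true =>
      exact mem_of_split hM ha hb (hc.mpr (h.trans hb'))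
        (fun hadj => by simp [hb'] at hf; exact hf hadj)
    | false =>
      exact mem_of_split hM hb ha (hf.mpr hb')
        (fun hadj => by rw [hc, h, hb'] at hadj; simp at hadj)
  · -- use a - 2
    have hc : (GmuZ μ).Adj (a - 2) a ↔ μ a = false := adj_far (by omega)
    have hf : (GmuZ μ).Adj (a - 2) b ↔ μ b = false := adj_far (by omega)
    refine ⟨a - 2, ?_, by omega⟩
    cases ha' : μ a with
    | true =>
      have : μ b = false := by cases hb' : μ b; rfl; exact absurd (ha'.trans hb'.symm) h
      exact mem_of_split hM hb ha (hf.mpr this)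
        (fun hadj => by rw [hc, ha'] at hadj; simp at hadj)
    | false =>
      have hbt : μ b = true := by cases hb' : μ b; exact absurd (ha'.trans hb'.symm) h; rfl
      exact mem_of_split hM ha hb (hc.mpr ha')
        (fun hadj => by rw [hf, hbt] at hadj; simp at hadj)

lemma down_iter {M : Set ℤ} (hM : IsModule (GmuZ μ) M) {a b : ℤ}
    (ha : a ∈ M) (hb : b ∈ M) (hab : a < b) :
    ∀ n : ℕ, ∃ c d, c ∈ M ∧ d ∈ M ∧ c < d ∧ d ≤ a - n := by
  intro n
  induction n with
  | zero =>
    obtain ⟨e, he, hea⟩ := step_down hM ha hb hab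
    exact ⟨e, a, he, ha, hea, by simp⟩
  | succ k ih =>
    obtain ⟨c, d, hc, hd, hcd, hda⟩ := ih
    obtain ⟨e, he, hec⟩ := step_down hM hc hd hcd
    exact ⟨e, c, he, hc, hec, by push_cast; omega⟩

lemma up_iter {M : Set ℤ} (hM : IsModule (GmuZ μ) M) {c d : ℤ}
    (hc : c ∈ M) (hd : d ∈ M) (hcd : c < d) :
    ∀ k : ℕ, d + k ∈ M := by
  intro k
  induction k with
  | zero => simpa using hd
  | succ k ih =>
    have := step_up hM hc ih (by omega)
    have he : d + (k + 1 : ℕ) = d + k + 1 := by push_cast; ring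
    rwa [he]

end Stmt9Aux

open Stmt9Aux in
theorem stmt9 (μ : ℤ → Bool) : GraphPrime (GmuZ μ) := by
  intro M hM
  by_cases he : ∃ a b, a ∈ M ∧ b ∈ M ∧ a ≠ b
  · right; right
    obtain ⟨a, b, ha, hb, hab⟩ := he
    have hpair : ∃ a b, a ∈ M ∧ b ∈ M ∧ a < b := by
      rcases lt_or_gt_of_ne hab with h | h
      · exact ⟨a, b, ha, hb, h⟩
      · exact ⟨b, a, hb, ha, h⟩
    obtain ⟨a, b, ha, hb, hab⟩ := hpair
    ext z
    simp only [Set.mem_univ, iff_true]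
    obtain ⟨c, d, hc, hd, hcd, hdz⟩ := down_iter hM ha hb hab (a - z).toNat
    have hdz' : d ≤ z := by omega
    have := up_iter hM hc hd hcd (z - d).toNat
    have hz : d + ((z - d).toNat : ℤ) = z := by omega
    rwa [hz] at this
  · push_neg at he
    by_cases hne : M = ∅
    · exact Or.inl hne
    · right; left
      obtain ⟨a, ha⟩ := Set.nonempty_iff_ne_empty.mpr hne
      exact ⟨a, Set.eq_singleton_iff_unique_mem.mpr ⟨ha, fun x hx => he x a hx ha⟩⟩
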